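/- Let 0 ≤ θ₁ < θ₂ < θ₃ < θ₄ < θ₅ < θ₆ < 2π and for each i let pᵢ = (cos θᵢ, sin θᵢ) ∈ ℝ². Then the interior of the convex hull of {p₁, p₂, p₃} and the interior of the convex hull of {p₄, p₅, p₆} are disjoint. -/

import Mathlib

lemma trig4 (u v : ℝ) : Real.sin (2*u) + Real.sin (2*v) - Real.sin (2*u + 2*v) =
    4 * Real.sin (u+v) * Real.sin u * Real.sin v := by
  rw [show (2*u+2*v) = 2*(u+v) by ring, Real.sin_two_mul, Real.sin_two_mul,
    Real.sin_two_mul, Real.sin_add, Real.cos_add]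
  linear_combination (-2*Real.sin u*Real.cos u) * Real.sin_sq_add_cos_sq v +
    (-2*Real.sin v*Real.cos v) * Real.sin_sq_add_cos_sq u

lemma arcs_chord_formula (θ₃ θ₆ θ : ℝ) :
    (Real.sin θ₆ - Real.sin θ₃) * Real.cos θ + (Real.cos θ₃ - Real.cos θ₆) * Real.sin θ -
      ((Real.sin θ₆ - Real.sin θ₃) * Real.cos θ₃ + (Real.cos θ₃ - Real.cos θ₆) * Real.sin θ₃) =
    4 * Real.sin ((θ₆ - θ₃) / 2) * Real.sin ((θ₆ - θ) / 2) * Real.sin ((θ - θ₃) / 2) := by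
  have h := trig4 ((θ₆ - θ) / 2) ((θ - θ₃) / 2)
  rw [show 2 * ((θ₆-θ)/2) = θ₆ - θ by ring, show 2*((θ-θ₃)/2) = θ - θ₃ by ring,
    show (θ₆-θ) + (θ-θ₃) = θ₆ - θ₃ by ring,
    show (θ₆-θ)/2 + (θ-θ₃)/2 = (θ₆-θ₃)/2 by ring,
    Real.sin_sub θ₆ θ, Real.sin_sub θ θ₃, Real.sin_sub θ₆ θ₃] at h
  linear_combination h

set_option maxHeartbeats 1600000 in
theorem separated_arcs_disjoint_interiors (θ₁ θ₂ θ₃ θ₄ θ₅ θ₆ : ℝ)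
    (h0 : 0 ≤ θ₁) (h12 : θ₁ < θ₂) (h23 : θ₂ < θ₃) (h34 : θ₃ < θ₄)
    (h45 : θ₄ < θ₅) (h56 : θ₅ < θ₆) (h6 : θ₆ < 2 * Real.pi) :
    interior (convexHull ℝ
        ({(Real.cos θ₁, Real.sin θ₁), (Real.cos θ₂, Real.sin θ₂),
          (Real.cos θ₃, Real.sin θ₃)} : Set (ℝ × ℝ))) ∩
      interior (convexHull ℝ
        ({(Real.cos θ₄, Real.sin θ₄), (Real.cos θ₅, Real.sin θ₅),
          (Real.cos θ₆, Real.sin θ₆)} : Set (ℝ × ℝ))) = ∅ := by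
  have hπ := Real.pi_pos
  set a : ℝ := Real.sin θ₆ - Real.sin θ₃ with ha
  set b : ℝ := Real.cos θ₃ - Real.cos θ₆ with hb
  set c : ℝ := a * Real.cos θ₃ + b * Real.sin θ₃ with hc
  clear_value a b c
  have key : ∀ θ : ℝ, a * Real.cos θ + b * Real.sin θ - c =
      4 * Real.sin ((θ₆ - θ₃) / 2) * Real.sin ((θ₆ - θ) / 2) * Real.sin ((θ - θ₃) / 2) := by
    intro θ; rw [ha, hb, hc, ha, hb]; exact arcs_chord_formula θ₃ θ₆ θ
  have hS : 0 < Real.sin ((θ₆ - θ₃) / 2) :=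
    Real.sin_pos_of_pos_of_lt_pi (by linarith) (by linarith)
  -- strict inequality on the left arc
  have left : ∀ θ : ℝ, 0 ≤ θ → θ < θ₃ → a * Real.cos θ + b * Real.sin θ < c := by
    intro θ hθ0 hθ3
    have h1 : 0 < Real.sin ((θ₆ - θ) / 2) :=
      Real.sin_pos_of_pos_of_lt_pi (by linarith) (by linarith)
    have h2 : Real.sin ((θ - θ₃) / 2) < 0 := by
      rw [show (θ - θ₃)/2 = -((θ₃ - θ)/2) by ring, Real.sin_neg, neg_neg_iff_pos]
      exact Real.sin_pos_of_pos_of_lt_pi (by linarith) (by linarith)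
    have hneg := mul_neg_of_pos_of_neg (mul_pos (mul_pos (by norm_num : (0:ℝ) < 4) hS) h1) h2
    linarith [key θ]
  have right : ∀ θ : ℝ, θ₃ < θ → θ < θ₆ → c < a * Real.cos θ + b * Real.sin θ := by
    intro θ hθ3 hθ6
    have h1 : 0 < Real.sin ((θ₆ - θ) / 2) :=
      Real.sin_pos_of_pos_of_lt_pi (by linarith) (by linarith)
    have h2 : 0 < Real.sin ((θ - θ₃) / 2) :=
      Real.sin_pos_of_pos_of_lt_pi (by linarith) (by linarith)
    have hpos := mul_pos (mul_pos (mul_pos (by norm_num : (0:ℝ) < 4) hS) h1) h2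
    linarith [key θ]
  have at3 : a * Real.cos θ₃ + b * Real.sin θ₃ = c := hc.symm
  have at6 : a * Real.cos θ₆ + b * Real.sin θ₆ = c := by
    have := key θ₆
    rw [show (θ₆ - θ₆)/2 = 0 by ring, Real.sin_zero, mul_zero, zero_mul] at this
    linarith [this]
  have hlin : IsLinearMap ℝ (fun p : ℝ × ℝ => a * p.1 + b * p.2) := by
    constructor
    · intro p q; simp only [Prod.fst_add, Prod.snd_add]; ring
    · intro t p; simp only [Prod.smul_fst, Prod.smul_snd, smul_eq_mul]; ring
  have sub1 : convexHull ℝ ({(Real.cos θ₁, Real.sin θ₁), (Real.cos θ₂, Real.sin θ₂),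
      (Real.cos θ₃, Real.sin θ₃)} : Set (ℝ × ℝ)) ⊆ {p : ℝ × ℝ | a * p.1 + b * p.2 ≤ c} := by
    apply convexHull_min _ (convex_halfSpace_le hlin c)
    intro p hp
    simp only [Set.mem_insert_iff, Set.mem_singleton_iff] at hp
    rcases hp with rfl | rfl | rfl
    · exact le_of_lt (left θ₁ h0 (by linarith))
    · exact le_of_lt (left θ₂ (by linarith) h23)
    · exact le_of_eq at3
  have sub2 : convexHull ℝ ({(Real.cos θ₄, Real.sin θ₄), (Real.cos θ₅, Real.sin θ₅),
      (Real.cos θ₆, Real.sin θ₆)} : Set (ℝ × ℝ)) ⊆ {p : ℝ × ℝ | c ≤ a * p.1 + b * p.2} := by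
    apply convexHull_min _ (convex_halfSpace_ge hlin c)
    intro p hp
    simp only [Set.mem_insert_iff, Set.mem_singleton_iff] at hp
    rcases hp with rfl | rfl | rfl
    · exact le_of_lt (right θ₄ h34 (by linarith))
    · exact le_of_lt (right θ₅ (by linarith) h56)
    · exact le_of_eq at6.symm
  rw [Set.eq_empty_iff_forall_notMem]
  rintro x ⟨hx1, hx2⟩
  have hxle : a * x.1 + b * x.2 ≤ c := sub1 (interior_subset hx1)
  have hxge : c ≤ a * x.1 + b * x.2 := sub2 (interior_subset hx2)
  -- a,b are not both zero since the strict inequality right θ₄ holds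
  have hab : 0 < a ^ 2 + b ^ 2 := by
    rcases (lt_or_eq_of_le (by positivity : (0:ℝ) ≤ a ^ 2 + b ^ 2)) with h | h
    · exact h
    · exfalso
      have ha0 : a = 0 := by nlinarith
      have hb0 : b = 0 := by nlinarith
      have := right θ₄ h34 (by linarith)
      rw [ha0, hb0] at this hc
      simp at hc this
      linarith
  obtain ⟨ε, εpos, hball⟩ := Metric.mem_nhds_iff.mp (mem_interior_iff_mem_nhds.mp hx1)
  have habs : 0 < |a| + |b| := by
    nlinarith [abs_nonneg a, abs_nonneg b, sq_abs a, sq_abs b]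
  set δ : ℝ := ε / (2 * (|a| + |b|)) with hδ
  have δpos : 0 < δ := by rw [hδ]; positivity
  clear_value δ
  have hy : (x.1 + δ * a, x.2 + δ * b) ∈ Metric.ball x ε := by
    rw [Metric.mem_ball, Prod.dist_eq]
    have d1 : dist (x.1 + δ * a) x.1 = δ * |a| := by
      rw [Real.dist_eq, add_sub_cancel_left, abs_mul, abs_of_pos δpos]
    have d2 : dist (x.2 + δ * b) x.2 = δ * |b| := by
      rw [Real.dist_eq, add_sub_cancel_left, abs_mul, abs_of_pos δpos]
    rw [d1, d2]
    have h1 : δ * |a| ≤ δ * (|a| + |b|) := by nlinarith [abs_nonneg b]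
    have h2 : δ * |b| ≤ δ * (|a| + |b|) := by nlinarith [abs_nonneg a]
    have h3 : δ * (|a| + |b|) = ε / 2 := by rw [hδ, div_mul_eq_mul_div, div_eq_div_iff (by positivity) (by norm_num)]; ring
    have : max (δ * |a|) (δ * |b|) ≤ ε / 2 := max_le (by linarith) (by linarith)
    linarith
  have hy2 : a * (x.1 + δ * a) + b * (x.2 + δ * b) ≤ c := sub1 (hball hy)
  nlinarith [mul_pos δpos hab]
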